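/- Let R be a commutative ring and let a, b ⊴ R be ideals with a + b = R, such that the quotient rings R/a and R/b are finite. Let M ⊆ Mat_{d×e}(R) be a finitely generated R-submodule. For an ideal c ⊴ R of finite index, let M_c denote the image of M under entrywise reduction Mat_{d×e}(R) → Mat_{d×e}(R/c). Then ask(M_{ab}) = ask(M_a) · ask(M_b), where ab denotes the product ideal. -/

import Mathlib

open Matrix

/-- The average size of the kernel of the elements of a set `N` of `m × n` matrices
over a commutative ring `S`, where matrices act on row vectors by right multiplication. -/
noncomputable def ask {S : Type*} [CommRing S] {m n : Type*} [Fintype m]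
    (N : Set (Matrix m n S)) : ℚ :=
  (Nat.card N : ℚ)⁻¹ *
    ∑ᶠ a : N, (Nat.card {x : m → S | Matrix.vecMul x (a : Matrix m n S) = 0} : ℚ)

/-- The image of a module of matrices over `R` under entrywise reduction modulo an
ideal `c`. -/
def reduceMod {R : Type*} [CommRing R] {d e : ℕ}
    (M : Submodule R (Matrix (Fin d) (Fin e) R)) (c : Ideal R) :
    Set (Matrix (Fin d) (Fin e) (R ⧸ c)) :=
  (fun A : Matrix (Fin d) (Fin e) R => A.map (Ideal.Quotient.mk c)) '' (M : Set _)

section aux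

variable {m n : Type*} [Fintype m] [Finite n]

/-- ask is invariant under a ring isomorphism applied entrywise. -/
lemma ask_map_ringEquiv {S T : Type*} [CommRing S] [CommRing T] [Finite S]
    (φ : S ≃+* T) (N : Set (Matrix m n S)) :
    ask ((fun A : Matrix m n S => A.map φ) '' N) = ask N := by
  classical
  haveI : Finite T := Finite.of_equiv S φ.toEquiv
  have hinj : Function.Injective (fun A : Matrix m n S => A.map φ) := by
    intro A B h
    ext i j
    exact φ.injective (congrFun (congrFun h i) j)
  have key : ∀ (A : Matrix m n S) (x : m → S),
      Matrix.vecMul ((φ : S →+* T) ∘ x) (A.map (φ : S →+* T))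
        = (φ : S →+* T) ∘ Matrix.vecMul x A := by
    intro A x; funext j; exact (RingHom.map_vecMul (φ : S →+* T) A x j).symm
  have hker : ∀ A : Matrix m n S,
      Nat.card {x : m → T | Matrix.vecMul x (A.map φ) = 0}
        = Nat.card {x : m → S | Matrix.vecMul x A = 0} := by
    intro A
    symm
    apply Nat.card_congr
    refine Equiv.subtypeEquiv (Equiv.arrowCongr (Equiv.refl m) φ.toEquiv) ?_
    intro x
    simp only [Set.mem_setOf_eq]
    have harr : ((Equiv.arrowCongr (Equiv.refl m) φ.toEquiv) x) = (φ : S →+* T) ∘ x := rfl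
    have hm : A.map ⇑φ = A.map (φ : S →+* T) := rfl
    rw [harr, hm, key A x]
    constructor
    · intro h; rw [h]; funext j; simp
    · intro h; funext j; apply φ.injective; simpa using congrFun h j
  unfold ask
  rw [Nat.card_image_of_injective hinj]
  congr 1
  haveI : Fintype N := Fintype.ofFinite _
  haveI : Fintype ((fun A : Matrix m n S => A.map φ) '' N : Set (Matrix m n T)) :=
    Fintype.ofFinite _
  rw [finsum_eq_sum_of_fintype, finsum_eq_sum_of_fintype,
    ← Equiv.sum_comp (Equiv.Set.image _ N hinj)]
  refine Finset.sum_congr rfl ?_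
  rintro ⟨A, hA⟩ -
  have h1 : ((Equiv.Set.image (fun A : Matrix m n S => A.map φ) N hinj ⟨A, hA⟩ : _)
      : Matrix m n T) = A.map φ := rfl
  rw [h1, hker A]

/-- Combine a pair of matrices over `S₁` and `S₂` into a matrix over `S₁ × S₂`. -/
def pairMat {S₁ S₂ : Type*} {m n : Type*} (p : Matrix m n S₁ × Matrix m n S₂) :
    Matrix m n (S₁ × S₂) :=
  Matrix.of fun i j => (p.1 i j, p.2 i j)

lemma ask_pairMat {S₁ S₂ : Type*} [CommRing S₁] [CommRing S₂] [Finite S₁] [Finite S₂]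
    (N₁ : Set (Matrix m n S₁)) (N₂ : Set (Matrix m n S₂)) :
    ask (pairMat '' (N₁ ×ˢ N₂)) = ask N₁ * ask N₂ := by
  classical
  have hinj : Function.Injective (pairMat (m := m) (n := n) (S₁ := S₁) (S₂ := S₂)) := by
    rintro ⟨A₁, A₂⟩ ⟨B₁, B₂⟩ h
    have h1 : ∀ i j, (A₁ i j, A₂ i j) = (B₁ i j, B₂ i j) := fun i j =>
      congrFun (congrFun h i) j
    refine Prod.ext ?_ ?_ <;> ext i j
    · exact congrArg Prod.fst (h1 i j)
    · exact congrArg Prod.snd (h1 i j)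
  have hker : ∀ (A₁ : Matrix m n S₁) (A₂ : Matrix m n S₂),
      (Nat.card {x : m → S₁ × S₂ | Matrix.vecMul x (pairMat (A₁, A₂)) = 0} : ℚ)
        = (Nat.card {x : m → S₁ | Matrix.vecMul x A₁ = 0} : ℚ)
          * (Nat.card {x : m → S₂ | Matrix.vecMul x A₂ = 0} : ℚ) := by
    intro A₁ A₂
    rw [← Nat.cast_mul]
    congr 1
    rw [← Nat.card_prod]
    apply Nat.card_congr
    have e1 : ∀ x : m → S₁ × S₂, Matrix.vecMul x (pairMat (A₁, A₂)) = 0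
        ↔ Matrix.vecMul (fun i => (x i).1) A₁ = 0 ∧ Matrix.vecMul (fun i => (x i).2) A₂ = 0 := by
      intro x
      have hf : ∀ j, (Matrix.vecMul x (pairMat (A₁, A₂)) j).1
          = Matrix.vecMul (fun i => (x i).1) A₁ j := by
        intro j
        have := RingHom.map_vecMul (RingHom.fst S₁ S₂) (pairMat (A₁, A₂)) x j
        rw [show (pairMat (A₁, A₂)).map (RingHom.fst S₁ S₂) = A₁ from by ext i k; rfl] at this
        simpa [pairMat, Matrix.map_apply, Function.comp_def] using this
      have hs : ∀ j, (Matrix.vecMul x (pairMat (A₁, A₂)) j).2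
          = Matrix.vecMul (fun i => (x i).2) A₂ j := by
        intro j
        have := RingHom.map_vecMul (RingHom.snd S₁ S₂) (pairMat (A₁, A₂)) x j
        rw [show (pairMat (A₁, A₂)).map (RingHom.snd S₁ S₂) = A₂ from by ext i k; rfl] at this
        simpa [pairMat, Matrix.map_apply, Function.comp_def] using this
      constructor
      · intro h
        constructor <;> funext j
        · rw [← hf j, h]; rfl
        · rw [← hs j, h]; rfl
      · rintro ⟨h1, h2⟩
        funext j
        have : (Matrix.vecMul x (pairMat (A₁, A₂)) j) = (0, 0) := by
          refine Prod.ext ?_ ?_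
          · rw [hf j, congrFun h1 j]; rfl
          · rw [hs j, congrFun h2 j]; rfl
        exact this
    refine Equiv.trans (Equiv.subtypeEquiv (Equiv.arrowProdEquivProdArrow m (fun _ => S₁) (fun _ => S₂))
      (fun x => ?_)) (Equiv.subtypeProdEquivProd
        (p := fun y : m → S₁ => Matrix.vecMul y A₁ = 0)
        (q := fun y : m → S₂ => Matrix.vecMul y A₂ = 0))
    simpa [Equiv.arrowProdEquivProdArrow] using e1 x
  haveI : Fintype ↥N₁ := Fintype.ofFinite _
  haveI : Fintype ↥N₂ := Fintype.ofFinite _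
  haveI : Fintype ↥(N₁ ×ˢ N₂) := Fintype.ofFinite _
  haveI : Fintype ↥(pairMat '' (N₁ ×ˢ N₂)) := Fintype.ofFinite _
  unfold ask
  rw [finsum_eq_sum_of_fintype, finsum_eq_sum_of_fintype, finsum_eq_sum_of_fintype,
    Nat.card_image_of_injective hinj, Nat.card_congr (Equiv.Set.prod N₁ N₂), Nat.card_prod]
  let EE : (↥N₁ × ↥N₂) ≃ ↥(pairMat '' (N₁ ×ˢ N₂)) :=
    (Equiv.Set.prod N₁ N₂).symm.trans (Equiv.Set.image _ _ hinj)
  have hsum : ∑ c : ↥(pairMat '' (N₁ ×ˢ N₂)),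
      (Nat.card {x : m → S₁ × S₂ | Matrix.vecMul x (c : Matrix m n (S₁ × S₂)) = 0} : ℚ)
      = (∑ a : ↥N₁, (Nat.card {x : m → S₁ | Matrix.vecMul x (a : Matrix m n S₁) = 0} : ℚ))
        * ∑ a2 : ↥N₂, (Nat.card {x : m → S₂ | Matrix.vecMul x (a2 : Matrix m n S₂) = 0} : ℚ) := by
    rw [← Equiv.sum_comp EE, Fintype.sum_prod_type, Finset.sum_mul_sum]
    refine Finset.sum_congr rfl ?_
    rintro ⟨A₁, h₁⟩ -
    refine Finset.sum_congr rfl ?_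
    rintro ⟨A₂, h₂⟩ -
    have h1 : ((EE (⟨A₁, h₁⟩, ⟨A₂, h₂⟩) : _) : Matrix m n (S₁ × S₂)) = pairMat (A₁, A₂) := rfl
    rw [h1, hker A₁ A₂]
  rw [hsum]
  push_cast
  rw [mul_inv]
  ring
end aux

/-- For coprime ideals `a, b` of finite index of `R` and a finitely generated submodule
`M ⊆ Mat_{d×e}(R)`, one has `ask(M_{ab}) = ask(M_a) · ask(M_b)`. -/
theorem ask_reduceMod_mul {R : Type*} [CommRing R] {d e : ℕ}
    (a b : Ideal R) (hab : a ⊔ b = ⊤) [Finite (R ⧸ a)] [Finite (R ⧸ b)]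
    (M : Submodule R (Matrix (Fin d) (Fin e) R)) (hM : M.FG) :
    ask (reduceMod M (a * b)) = ask (reduceMod M a) * ask (reduceMod M b) := by
  classical
  have hcop : IsCoprime a b := Ideal.isCoprime_iff_sup_eq.mpr hab
  set φ := Ideal.quotientMulEquivQuotientProd a b hcop with hφ
  haveI : Finite (R ⧸ a * b) := Finite.of_equiv _ φ.symm.toEquiv
  have himg : (fun A : Matrix (Fin d) (Fin e) (R ⧸ a * b) => A.map φ) '' reduceMod M (a * b)
      = pairMat '' (reduceMod M a ×ˢ reduceMod M b) := by
    ext C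
    constructor
    · rintro ⟨-, ⟨B, hB, rfl⟩, rfl⟩
      refine ⟨(B.map (Ideal.Quotient.mk a), B.map (Ideal.Quotient.mk b)),
        ⟨⟨B, hB, rfl⟩, ⟨B, hB, rfl⟩⟩, ?_⟩
      ext i j
      · simp [pairMat, Matrix.map_apply, hφ, Ideal.Quotient.factor_mk]
      · simp [pairMat, Matrix.map_apply, hφ, Ideal.Quotient.factor_mk]
    · rintro ⟨⟨C₁, C₂⟩, ⟨⟨A, hA, rfl⟩, ⟨B, hB, rfl⟩⟩, rfl⟩
      obtain ⟨u, hu, v, hv, huv⟩ := Submodule.mem_sup.mp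
        (show (1 : R) ∈ a ⊔ b from hab ▸ Submodule.mem_top)
      set D := v • A + u • B with hD
      have hDM : D ∈ M := M.add_mem (M.smul_mem v hA) (M.smul_mem u hB)
      have hmka : ∀ i j, Ideal.Quotient.mk a (D i j) = Ideal.Quotient.mk a (A i j) := by
        intro i j
        have hu0 : Ideal.Quotient.mk a u = 0 := Ideal.Quotient.eq_zero_iff_mem.mpr hu
        have hv1 : Ideal.Quotient.mk a v = 1 := by
          have : v = 1 - u := by linear_combination huv
          rw [this, _root_.map_sub, _root_.map_one, hu0, sub_zero]
        simp [hD, Matrix.add_apply, Matrix.smul_apply, smul_eq_mul, _root_.map_add, _root_.map_mul, hu0, hv1]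
      have hmkb : ∀ i j, Ideal.Quotient.mk b (D i j) = Ideal.Quotient.mk b (B i j) := by
        intro i j
        have hv0 : Ideal.Quotient.mk b v = 0 := Ideal.Quotient.eq_zero_iff_mem.mpr hv
        have hu1 : Ideal.Quotient.mk b u = 1 := by
          have : u = 1 - v := by linear_combination huv
          rw [this, _root_.map_sub, _root_.map_one, hv0, sub_zero]
        simp [hD, Matrix.add_apply, Matrix.smul_apply, smul_eq_mul, _root_.map_add, _root_.map_mul, hv0, hu1]
      refine ⟨D.map (Ideal.Quotient.mk (a * b)), ⟨D, hDM, rfl⟩, ?_⟩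
      ext i j
      · simpa [pairMat, Matrix.map_apply, hφ, Ideal.Quotient.factor_mk] using hmka i j
      · simpa [pairMat, Matrix.map_apply, hφ, Ideal.Quotient.factor_mk] using hmkb i j
  calc ask (reduceMod M (a * b))
      = ask ((fun A : Matrix (Fin d) (Fin e) (R ⧸ a * b) => A.map φ) '' reduceMod M (a * b)) :=
        (ask_map_ringEquiv φ _).symm
    _ = ask (pairMat '' (reduceMod M a ×ˢ reduceMod M b)) := by rw [himg]
    _ = ask (reduceMod M a) * ask (reduceMod M b) := ask_pairMat _ _
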